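/- Let C be a category, let (p0 : A0 → B0, s0 : B0 → A0) and (p1 : A1 → B1, s1 : B1 → A1) be split epimorphisms (p0 ∘ s0 = id, p1 ∘ s1 = id), and let f : A0 → A1 and g : B0 → B1 satisfy p1 ∘ f = g ∘ p0 and f ∘ s0 = s1 ∘ g. If f is an epimorphism, then the commutative square with sides f, p0, p1, g (i.e. g ∘ p0 = p1 ∘ f) is a pushout square. -/
import Mathlib

open CategoryTheory

/-- A morphism of points `(f, g) : (p0, s0) → (p1, s1)` whose first component `f` is an
epimorphism yields a pushout square `g ∘ p0 = p1 ∘ f`. -/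
theorem point_morphism_epi_is_pushout {C : Type*} [Category C] {A₀ B₀ A₁ B₁ : C}
    (p₀ : A₀ ⟶ B₀) (s₀ : B₀ ⟶ A₀) (p₁ : A₁ ⟶ B₁) (s₁ : B₁ ⟶ A₁)
    (hs₀ : s₀ ≫ p₀ = 𝟙 B₀) (hs₁ : s₁ ≫ p₁ = 𝟙 B₁)
    (f : A₀ ⟶ A₁) (g : B₀ ⟶ B₁)
    (hpf : f ≫ p₁ = p₀ ≫ g) (hsf : s₀ ≫ f = g ≫ s₁)
    [Epi f] :
    IsPushout p₀ f g p₁ := by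
  refine ⟨⟨hpf.symm⟩, ⟨Limits.PushoutCocone.IsColimit.mk _ (fun c => s₁ ≫ c.inr)
    (fun c => ?_) (fun c => ?_) (fun c m h1 h2 => ?_)⟩⟩
  · show g ≫ s₁ ≫ c.inr = c.inl
    rw [← Category.assoc, ← hsf, Category.assoc, ← c.condition, ← Category.assoc, hs₀,
      Category.id_comp]
  · show p₁ ≫ s₁ ≫ c.inr = c.inr
    rw [← cancel_epi f]
    slice_lhs 1 2 => rw [hpf]
    slice_lhs 2 3 => rw [← hsf]
    slice_lhs 3 4 => rw [← c.condition]
    slice_lhs 2 3 => rw [hs₀]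
    simp [c.condition]
  · show m = s₁ ≫ c.inr
    rw [← h2, ← Category.assoc, hs₁, Category.id_comp]
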